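/- Let g(β) = ‖y − Xβ‖₂² and L ≥ 2λ_max(XᵀX). If η ∈ H_k(β − (1/L)∇g(β)) (a hard-thresholded gradient step), then g(η) ≤ Q_L(η, β) ≤ Q_L(β, β) = g(β), i.e., the discrete first-order iteration does not increase the objective, provided ‖β‖₀ ≤ k. -/

import Mathlib

open Matrix

/-- restored from older Mathlib (removed since) -/
theorem Matrix.isHermitian_transpose_mul_self {m n : Type*} [Fintype m] (A : Matrix m n ℝ) :
    (Aᵀ * A).IsHermitian := by
  simpa using Matrix.isHermitian_conjTranspose_mul_self A

/-- number of nonzero coordinates, `‖β‖₀` -/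
noncomputable def l0 {p : ℕ} (β : Fin p → ℝ) : ℕ := (Finset.univ.filter fun i => β i ≠ 0).card

lemma quad_form_le {p : ℕ} (hp : 0 < p) (A : Matrix (Fin p) (Fin p) ℝ) (hA : A.IsHermitian)
    (v : Fin p → ℝ) :
    v ⬝ᵥ A.mulVec v ≤ (Finset.univ.sup' ⟨⟨0, hp⟩, Finset.mem_univ _⟩ hA.eigenvalues) * ∑ i, v i ^ 2 := by
  set b := hA.eigenvectorBasis with hb
  set lam := Finset.univ.sup' ⟨⟨0, hp⟩, Finset.mem_univ _⟩ hA.eigenvalues with hlam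
  have hdot : ∀ x y : EuclideanSpace ℝ (Fin p), (x : Fin p → ℝ) ⬝ᵥ (y : Fin p → ℝ) = inner ℝ x y := by
    intro x y; simp [dotProduct, PiLp.inner_apply, mul_comm]
  set w : EuclideanSpace ℝ (Fin p) := WithLp.toLp 2 v with hw
  set Tw : EuclideanSpace ℝ (Fin p) := WithLp.toLp 2 (A.mulVec v) with hTw
  have hAT : Aᵀ = A := by
    have := hA; rwa [Matrix.IsHermitian, conjTranspose_eq_transpose_of_trivial] at this
  have key : ∀ j, (inner ℝ (b j) Tw : ℝ) = hA.eigenvalues j * inner ℝ (b j) w := by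
    intro j
    rw [← hdot, ← hdot]
    show (b j : Fin p → ℝ) ⬝ᵥ (A *ᵥ v) = _
    rw [dotProduct_mulVec, ← mulVec_transpose, hAT]
    erw [hA.mulVec_eigenvectorBasis]
    rw [smul_dotProduct]
    rfl
  have expand : (inner ℝ w Tw : ℝ) = ∑ j, hA.eigenvalues j * (inner ℝ (b j) w : ℝ) ^ 2 := by
    rw [← b.sum_inner_mul_inner w Tw]
    congr 1; ext j
    rw [key j, real_inner_comm w (b j)]; ring
  have parseval : ∑ j, (inner ℝ (b j) w : ℝ) ^ 2 = ∑ i, v i ^ 2 := by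
    have := b.sum_inner_mul_inner w w
    have h2 : (inner ℝ w w : ℝ) = ∑ i, v i ^ 2 := by
      rw [← hdot]; simp [hw, dotProduct, sq]
    rw [← h2, ← this]
    congr 1; ext j; rw [real_inner_comm w (b j)]; ring
  have : v ⬝ᵥ A.mulVec v = (inner ℝ w Tw : ℝ) := hdot w Tw
  rw [this, expand, ← parseval, Finset.mul_sum]
  apply Finset.sum_le_sum
  intro j _
  exact mul_le_mul_of_nonneg_right (Finset.le_sup' _ (Finset.mem_univ j)) (sq_nonneg _)

/-- One step of the discrete first-order method does not increase the least squares
objective: if `‖β‖₀ ≤ k`, `L ≥ 2 λ_max(XᵀX)` and `η` is a hard-thresholded gradient step,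
i.e. a minimizer of `‖· - (β - (1/L)∇g(β))‖₂²` over the sparsity constraint, then
`g η ≤ Q_L(η, β) ≤ Q_L(β, β) = g β`. -/
theorem dfo_step_decreases {n p k : ℕ} (hp : 0 < p)
    (X : Matrix (Fin n) (Fin p) ℝ) (y : Fin n → ℝ)
    (g : (Fin p → ℝ) → ℝ) (hg : g = fun β => ∑ r, (y r - X.mulVec β r) ^ 2)
    (grad : (Fin p → ℝ) → (Fin p → ℝ))
    (hgrad : ∀ β, grad β = fun i => -2 * Xᵀ.mulVec (y - X.mulVec β) i)
    (lam : ℝ)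
    (hlam : lam = Finset.univ.sup' ⟨⟨0, hp⟩, Finset.mem_univ _⟩
        (Matrix.isHermitian_transpose_mul_self X).eigenvalues)
    (L : ℝ) (hL : 2 * lam ≤ L)
    (Q : (Fin p → ℝ) → (Fin p → ℝ) → ℝ)
    (hQ : Q = fun η β => g β + L / 2 * ∑ i, (η i - β i) ^ 2 + ∑ i, (η i - β i) * grad β i)
    (β : Fin p → ℝ) (hβ : l0 β ≤ k)
    (c : Fin p → ℝ) (hc : c = β - (1 / L) • grad β)
    (η : Fin p → ℝ) (hηk : l0 η ≤ k)
    (hηmin : ∀ η' : Fin p → ℝ, l0 η' ≤ k →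
      ∑ i, (η i - c i) ^ 2 ≤ ∑ i, (η' i - c i) ^ 2) :
    g η ≤ Q η β ∧ Q η β ≤ Q β β ∧ Q β β = g β := by
  -- quadratic form bound for A = XᵀX
  have hquad : ∀ v : Fin p → ℝ, ∑ r, (X.mulVec v r) ^ 2 ≤ lam * ∑ i, v i ^ 2 := by
    intro v
    have h1 : ∑ r, (X.mulVec v r) ^ 2 = v ⬝ᵥ (Xᵀ * X).mulVec v := by
      rw [← mulVec_mulVec, dotProduct_mulVec, ← mulVec_transpose, transpose_transpose]
      simp [dotProduct, sq]
    rw [h1, hlam]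
    exact quad_form_le hp (Xᵀ * X) (Matrix.isHermitian_transpose_mul_self X) v
  have hQ3 : Q β β = g β := by simp [hQ]
  by_cases hLpos : 0 < L
  · -- main case
    have hL2 : lam ≤ L / 2 := by linarith
    -- expansion of g η
    have hgradsum : ∑ i, (η i - β i) * grad β i
        = -2 * ∑ r, (X.mulVec (η - β) r) * (y r - X.mulVec β r) := by
      simp only [hgrad]
      have h1 : ∑ i, (η i - β i) * (-2 * (Xᵀ *ᵥ (y - X *ᵥ β)) i)
          = -2 * ((η - β) ⬝ᵥ (Xᵀ *ᵥ (y - X *ᵥ β))) := by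
        rw [dotProduct, Finset.mul_sum]
        congr 1; ext i; simp [Pi.sub_apply]; ring
      rw [h1, dotProduct_mulVec, vecMul_transpose]
      congr 1
    have hgexp : g η = g β + ∑ i, (η i - β i) * grad β i + ∑ r, (X.mulVec (η - β) r) ^ 2 := by
      rw [hgradsum]
      simp only [hg]
      have hpt : ∀ r, (y r - X.mulVec η r) ^ 2
          = (y r - X.mulVec β r) ^ 2 + (-2 * ((X.mulVec (η - β) r) * (y r - X.mulVec β r)))
            + (X.mulVec (η - β) r) ^ 2 := by
        intro r
        have h := congrFun (mulVec_sub X η β) r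
        simp only [Pi.sub_apply] at h
        rw [h]; ring
      rw [Finset.sum_congr rfl (fun r _ => hpt r), Finset.sum_add_distrib, Finset.sum_add_distrib,
        ← Finset.mul_sum]
    have hXd : ∑ r, (X.mulVec (η - β) r) ^ 2 ≤ L / 2 * ∑ i, (η i - β i) ^ 2 := by
      have h1 := hquad (η - β)
      have h2 : ∑ i, (η - β) i ^ 2 = ∑ i, (η i - β i) ^ 2 :=
        Finset.sum_congr rfl (fun i _ => by simp [Pi.sub_apply])
      rw [h2] at h1
      have hs : (0:ℝ) ≤ ∑ i, (η i - β i) ^ 2 := Finset.sum_nonneg fun i _ => sq_nonneg _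
      nlinarith
    have part1 : g η ≤ Q η β := by
      rw [hQ]; simp only
      rw [hgexp]; linarith
    have hQη : Q η β = g β + L / 2 * (∑ i, (η i - c i) ^ 2 - ∑ i, (β i - c i) ^ 2) := by
      rw [hQ]; simp only
      have hid : ∀ i, L / 2 * (η i - β i) ^ 2 + (η i - β i) * grad β i
          = L / 2 * ((η i - c i) ^ 2 - (β i - c i) ^ 2) := by
        intro i
        have hci : c i = β i - 1 / L * grad β i := by rw [hc]; simp [Pi.sub_apply]
        rw [hci]
        field_simp
        ring
      have : L / 2 * ∑ i, (η i - β i) ^ 2 + ∑ i, (η i - β i) * grad β i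
          = ∑ i, (L / 2 * (η i - β i) ^ 2 + (η i - β i) * grad β i) := by
        rw [Finset.sum_add_distrib, Finset.mul_sum]
      rw [add_assoc, this, Finset.sum_congr rfl (fun i _ => hid i), ← Finset.mul_sum,
        Finset.sum_sub_distrib]
    have part2 : Q η β ≤ Q β β := by
      rw [hQ3, hQη]
      have hmin := hηmin β hβ
      nlinarith
    exact ⟨part1, part2, hQ3⟩
  · -- degenerate case : L ≤ 0, hence X = 0, grad = 0, η = β
    push_neg at hLpos
    have hlam0 : lam ≤ 0 := by linarith
    have hX0 : X = 0 := by
      ext r j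
      have := hquad (Pi.single j 1)
      have hs : ∑ i, (Pi.single j 1 : Fin p → ℝ) i ^ 2 = 1 := by
        simp [Pi.single_apply, Finset.sum_ite_eq']
      rw [hs, mul_one] at this
      have hnn : ∀ r', (0:ℝ) ≤ (X.mulVec (Pi.single j 1) r') ^ 2 := fun _ => sq_nonneg _
      have h0 : X.mulVec (Pi.single j 1) r = 0 := by
        have hz : ∑ r, (X.mulVec (Pi.single j 1) r) ^ 2 = 0 :=
          le_antisymm (this.trans hlam0) (Finset.sum_nonneg fun i _ => hnn i)
        have := (Finset.sum_eq_zero_iff_of_nonneg (fun i _ => hnn i)).1 hz r (Finset.mem_univ r)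
        exact pow_eq_zero_iff (by norm_num) |>.1 this
      simpa [mulVec_single] using h0
    have hgrad0 : grad β = 0 := by
      rw [hgrad]; ext i; simp [hX0]
    have hcβ : c = β := by rw [hc, hgrad0]; simp
    have hηβ : η = β := by
      have := hηmin β hβ
      rw [hcβ] at this
      simp at this
      funext i
      have h0 : ∑ i, (η i - β i) ^ 2 = 0 := le_antisymm this (Finset.sum_nonneg fun i _ => sq_nonneg _)
      have := (Finset.sum_eq_zero_iff_of_nonneg (fun i _ => sq_nonneg _)).1 h0 i (Finset.mem_univ i)
      have := pow_eq_zero_iff (n := 2) (by norm_num) |>.1 this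
      linarith
    subst hηβ
    exact ⟨le_of_eq hQ3.symm, le_refl _, hQ3⟩
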